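/- Consider the program with rules 'p(1) ← p(0)', 'p(0) ← p(1)', and 'p(1) ← count{X:p(X)} ≠ 1'. Under the aggregate-reduct semantics (the third rule is deleted w.r.t. S if |{t : p(t)∈S}| = 1, else its body is replaced by {p(t) : p(t)∈S}; S is an answer set iff S is the least model of the reduct), this program has no answer set. In particular {p(0),p(1)} is not an answer set, even though it is a minimal set satisfying all three rules under ordinary satisfaction where the aggregate atom is evaluated in S. -/
import Mathlib


/-- Models and least models of ground definite programs. -/
def IsModel {α : Type*} (P : Set (α × Set α)) (A : Set α) : Prop :=
  ∀ r ∈ P, r.2 ⊆ A → r.1 ∈ A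

def IsLeastModel {α : Type*} (P : Set (α × Set α)) (A : Set α) : Prop :=
  IsModel P A ∧ ∀ M : Set α, IsModel P M → A ⊆ M

/-- Atoms: `false` = p(0), `true` = p(1).  Aggregate reduct of the program
`{p(1) ← p(0)., p(0) ← p(1)., p(1) ← count{X:p(X)} ≠ 1}` w.r.t. S: the third rule
is deleted if |{t : p(t)∈S}| = 1, otherwise its body becomes {p(t) : p(t) ∈ S}. -/
def reduct (S : Set Bool) : Set (Bool × Set Bool) :=
  {r | r = (true, ({false} : Set Bool))} ∪
  {r | r = (false, ({true} : Set Bool))} ∪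
  {r | Set.ncard {t : Bool | t ∈ S} ≠ 1 ∧ r = (true, S)}

def AnswerSet (S : Set Bool) : Prop := IsLeastModel (reduct S) S

/-- Ordinary satisfaction of the three rules, evaluating the aggregate in S. -/
def SatisfiesRules (S : Set Bool) : Prop :=
  (false ∈ S → true ∈ S) ∧ (true ∈ S → false ∈ S) ∧
  (Set.ncard {t : Bool | t ∈ S} ≠ 1 → true ∈ S)

lemma setOf_mem (S : Set Bool) : {t : Bool | t ∈ S} = S := rfl

lemma no_as : ∀ S : Set Bool, ¬ AnswerSet S := by
  intro S ⟨hmod, hleast⟩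
  by_cases hS : S = ∅
  · subst hS
    have hmem : (true, (∅ : Set Bool)) ∈ reduct ∅ := by
      right
      exact ⟨by simp [setOf_mem], rfl⟩
    have := hmod _ hmem (by simp)
    simp at this
  · have hempty : IsModel (reduct S) (∅ : Set Bool) := by
      intro r hr hsub
      rcases hr with (h | h) | h
      · simp only [Set.mem_setOf_eq] at h; subst h
        simpa using hsub rfl
      · simp only [Set.mem_setOf_eq] at h; subst h
        simpa using hsub rfl
      · obtain ⟨-, h⟩ := h; subst h
        exact absurd (Set.subset_empty_iff.mp hsub) hS
    exact hS (Set.subset_empty_iff.mp (hleast _ hempty))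

theorem no_answer_set_but_minimal_model :
    (∀ S : Set Bool, ¬ AnswerSet S) ∧
    ¬ AnswerSet {false, true} ∧
    SatisfiesRules {false, true} ∧
    (∀ B : Set Bool, B ⊆ {false, true} → SatisfiesRules B → B = {false, true}) := by
  refine ⟨no_as, no_as _, ⟨by simp, by simp, fun _ => by simp⟩, ?_⟩
  intro B _ ⟨h1, h2, h3⟩
  by_cases hf : false ∈ B
  · have ht := h1 hf
    ext x; cases x <;> simp [hf, ht]
  · by_cases ht : true ∈ B
    · exact absurd (h2 ht) hf
    · have hB : B = ∅ := by
        ext x; cases x <;> simp [hf, ht]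
      exact absurd (h3 (by simp [hB, setOf_mem])) ht
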